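/- Let f, g, u, v be holomorphic functions on 𝔹_N with f(0) = g(0) = u(0) = v(0) = 0, and set φ = f + conj(g), ψ = u + conj(v). If the function z ↦ f(z)·conj(v(z)) − u(z)·conj(g(z)) is pluriharmonic on 𝔹_N, then at least one of the following holds: (i) g ≡ 0 and v ≡ 0 (both φ and ψ are holomorphic); (ii) f ≡ 0 and u ≡ 0 (both φ and ψ are anti-holomorphic); or (iii) there exist c_1, c_2 ∈ ℂ, not both zero, such that c_1·φ(z) + c_2·ψ(z) = 0 for all z ∈ 𝔹_N. -/

import Mathlib

open MeasureTheory Metric Complex ComplexConjugate Finset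
open scoped ENNReal

noncomputable section

/-- `ℂ^N` with its (product) Lebesgue measure; `EuclideanSpace ℂ (Fin N)` is definitionally
`Fin N → ℂ`. -/
instance (N : ℕ) : MeasureSpace (EuclideanSpace ℂ (Fin N)) :=
  ⟨Measure.map (MeasurableEquiv.toLp 2 (Fin N → ℂ)) volume⟩

variable {N : ℕ}

/-- Hermitian inner product `⟨z,w⟩ = Σ z_j conj(w_j)`. -/
def hinner (z w : EuclideanSpace ℂ (Fin N)) : ℂ := ∑ j, z j * conj (w j)

/-- Lebesgue measure on `ℂ^N` normalized so that the unit ball has measure 1. -/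
def volB (N : ℕ) : Measure (EuclideanSpace ℂ (Fin N)) :=
  (volume (ball (0 : EuclideanSpace ℂ (Fin N)) 1))⁻¹ • volume

/-- The Berezin transform of `u`. -/
def berezin (u : EuclideanSpace ℂ (Fin N) → ℂ) (z : EuclideanSpace ℂ (Fin N)) : ℂ :=
  (((1 - ‖z‖ ^ 2) ^ (N + 1) : ℝ) : ℂ) *
    ∫ ξ in ball (0 : EuclideanSpace ℂ (Fin N)) 1,
      u ξ / ((‖1 - hinner z ξ‖ ^ (2 * (N + 1)) : ℝ) : ℂ) ∂(volB N)

/-- Pluriharmonic on the unit ball: sum of a holomorphic and an anti-holomorphic function. -/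
def Pluriharmonic (h : EuclideanSpace ℂ (Fin N) → ℂ) : Prop :=
  ∃ f g : EuclideanSpace ℂ (Fin N) → ℂ,
    DifferentiableOn ℂ f (ball 0 1) ∧ DifferentiableOn ℂ g (ball 0 1) ∧
      ∀ z ∈ ball (0 : EuclideanSpace ℂ (Fin N)) 1, h z = f z + conj (g z)

/-- `B(u)` has finite rank: it is a finite sum `Σ f_j conj(g_j)` with `f_j, g_j` holomorphic. -/
def FiniteRankBerezin (u : EuclideanSpace ℂ (Fin N) → ℂ) : Prop :=
  ∃ (n : ℕ) (f g : Fin n → EuclideanSpace ℂ (Fin N) → ℂ),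
    (∀ j, DifferentiableOn ℂ (f j) (ball 0 1)) ∧
    (∀ j, DifferentiableOn ℂ (g j) (ball 0 1)) ∧
    ∀ z ∈ ball (0 : EuclideanSpace ℂ (Fin N)) 1,
      berezin u z = ∑ j, f j z * conj (g j z)

/-- Wirtinger derivative `∂/∂z_j`. -/
def wdz (j : Fin N) (f : EuclideanSpace ℂ (Fin N) → ℂ) (z : EuclideanSpace ℂ (Fin N)) : ℂ :=
  (1 / 2 : ℂ) * (fderiv ℝ f z (EuclideanSpace.single j 1)
    - Complex.I * fderiv ℝ f z (EuclideanSpace.single j Complex.I))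

/-- Wirtinger derivative `∂/∂conj(z_j)`. -/
def wdzbar (j : Fin N) (f : EuclideanSpace ℂ (Fin N) → ℂ) (z : EuclideanSpace ℂ (Fin N)) : ℂ :=
  (1 / 2 : ℂ) * (fderiv ℝ f z (EuclideanSpace.single j 1)
    + Complex.I * fderiv ℝ f z (EuclideanSpace.single j Complex.I))

/-- The radial operator `E = Σ z_j ∂/∂z_j`. -/
def Eop (f : EuclideanSpace ℂ (Fin N) → ℂ) (z : EuclideanSpace ℂ (Fin N)) : ℂ :=
  ∑ j, z j * wdz j f z

/-- The radial operator `Ē = Σ conj(z_j) ∂/∂conj(z_j)`. -/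
def Ebarop (f : EuclideanSpace ℂ (Fin N) → ℂ) (z : EuclideanSpace ℂ (Fin N)) : ℂ :=
  ∑ j, conj (z j) * wdzbar j f z

/-- The Laplacian `Δ = Σ ∂²/(∂z_j ∂conj(z_j))`. -/
def lapOp (f : EuclideanSpace ℂ (Fin N) → ℂ) (z : EuclideanSpace ℂ (Fin N)) : ℂ :=
  ∑ j, wdz j (wdzbar j f) z

/-- The operator `|E+s|² − Δ = (E+s)∘(Ē+s) − Δ`. -/
def stepOp (s : ℝ) (f : EuclideanSpace ℂ (Fin N) → ℂ) : EuclideanSpace ℂ (Fin N) → ℂ :=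
  fun z => (Eop (fun w => Ebarop f w + (s : ℂ) * f w) z
      + (s : ℂ) * (Ebarop f z + (s : ℂ) * f z)) - lapOp f z

/-- The composition `(|E+m|²−Δ)∘(|E+(m−1)|²−Δ)∘⋯∘(|E+0|²−Δ)`. -/
def iterOp : ℕ → (EuclideanSpace ℂ (Fin N) → ℂ) → (EuclideanSpace ℂ (Fin N) → ℂ)
  | 0 => stepOp 0
  | (m + 1) => fun f => stepOp (m + 1) (iterOp m f)

/-- The invariant Laplacian `Δ̃ = (1−|z|²)(Δ − |E|²)`. -/
def invLap (f : EuclideanSpace ℂ (Fin N) → ℂ) (z : EuclideanSpace ℂ (Fin N)) : ℂ :=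
  (((1 - ‖z‖ ^ 2 : ℝ)) : ℂ) * (lapOp f z - Eop (Ebarop f) z)

/-- The operator `c − Δ̃` (a single factor of `p_m(Δ̃)`). -/
def factorOp (c : ℂ) (f : EuclideanSpace ℂ (Fin N) → ℂ) : EuclideanSpace ℂ (Fin N) → ℂ :=
  fun z => c * f z - invLap f z

/-- The product of operators `∏_{j=0}^{m} (j(j−N) − Δ̃)`. -/
def prodOp (N : ℕ) : ℕ → (EuclideanSpace ℂ (Fin N) → ℂ) → (EuclideanSpace ℂ (Fin N) → ℂ)
  | 0 => factorOp ((0 : ℂ) * ((0 : ℂ) - (N : ℂ)))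
  | (m + 1) => fun f => factorOp (((m : ℂ) + 1) * (((m : ℂ) + 1) - (N : ℂ))) (prodOp N m f)

open Classical in
/-- The Möbius automorphism `φ_w` of the unit ball interchanging `0` and `w`. -/
def mobius (w z : EuclideanSpace ℂ (Fin N)) : EuclideanSpace ℂ (Fin N) :=
  ((1 - hinner z w)⁻¹ : ℂ) •
    (w - (if w = 0 then 0 else (hinner z w / hinner w w) • w)
      - ((Real.sqrt (1 - ‖w‖ ^ 2) : ℝ) : ℂ) •
        (z - (if w = 0 then 0 else (hinner z w / hinner w w) • w)))

private lemma conj_conj_diffAt {F : ℂ × ℂ → ℂ} {p : ℂ × ℂ}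
    (h : DifferentiableAt ℂ F (conj p.1, conj p.2)) :
    DifferentiableAt ℂ (fun q : ℂ × ℂ => conj (F (conj q.1, conj q.2))) p := by
  obtain ⟨d, hd⟩ := h
  let κ : ℂ →L[ℝ] ℂ := Complex.conjCLE.toContinuousLinearMap
  let σ : ℂ × ℂ →L[ℝ] ℂ × ℂ := κ.prodMap κ
  have hσ : ∀ q : ℂ × ℂ, σ q = (conj q.1, conj q.2) := fun q => rfl
  have h1 : HasFDerivAt F (d.restrictScalars ℝ) (σ p) := by
    rw [hσ]; exact hd.restrictScalars ℝ
  have h2 : HasFDerivAt (fun q : ℂ × ℂ => F (σ q)) ((d.restrictScalars ℝ).comp σ) p :=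
    h1.comp p σ.hasFDerivAt
  have h3 := κ.hasFDerivAt.comp p h2
  have hfun : (⇑κ ∘ fun q : ℂ × ℂ => F (σ q)) = fun q : ℂ × ℂ => conj (F (conj q.1, conj q.2)) := by
    funext q; simp [κ, σ, Complex.conjCLE_apply, Prod.map]
  rw [hfun] at h3
  let dl : (ℂ × ℂ) →ₗ[ℂ] ℂ :=
    { toFun := fun q => conj (d (conj q.1, conj q.2))
      map_add' := fun a b => by
        show conj (d (conj (a + b).1, conj (a + b).2))
            = conj (d (conj a.1, conj a.2)) + conj (d (conj b.1, conj b.2))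
        have e : ((conj (a + b).1, conj (a + b).2) : ℂ × ℂ)
            = (conj a.1, conj a.2) + (conj b.1, conj b.2) := by
          simp [Prod.ext_iff]
        rw [e, map_add, map_add]
      map_smul' := fun c q => by
        show conj (d (conj (c • q).1, conj (c • q).2)) = c • conj (d (conj q.1, conj q.2))
        have e : ((conj (c • q).1, conj (c • q).2) : ℂ × ℂ)
            = conj c • ((conj q.1, conj q.2) : ℂ × ℂ) := by
          simp [Prod.ext_iff, smul_eq_mul]
        rw [e, d.map_smul, smul_eq_mul, map_mul]
        simp [smul_eq_mul] }
  refine ⟨dl.toContinuousLinearMap, hasFDerivAt_of_restrictScalars ℝ h3 ?_⟩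
  ext q <;>
  simp [dl, κ, σ, Complex.conjCLE_apply, Prod.map]

private lemma extend_one_var {φ : ℂ → ℂ} {S : Set ℂ} (hconv : Convex ℝ S) (hopen : IsOpen S)
    (hdiff : ∀ t ∈ S, DifferentiableAt ℂ φ t) (h0 : (0 : ℂ) ∈ S) {ε : ℝ} (hε : 0 < ε)
    (hval : ∀ t : ℝ, |t| < ε → φ t = 0) : ∀ s ∈ S, φ s = 0 := by
  have hDO : DifferentiableOn ℂ φ S := fun t ht => (hdiff t ht).differentiableWithinAt
  have hA : AnalyticOnNhd ℂ φ S := hDO.analyticOnNhd hopen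
  have hfreq : ∃ᶠ x in nhdsWithin (0 : ℂ) {(0:ℂ)}ᶜ, φ x = 0 := by
    rw [Filter.frequently_iff]
    intro U hU
    rcases Metric.mem_nhdsWithin_iff.1 hU with ⟨δ, hδ, hsub⟩
    have hpos : 0 < min ε δ / 2 := by positivity
    refine ⟨((min ε δ / 2 : ℝ) : ℂ), hsub ⟨?_, ?_⟩, hval _ ?_⟩
    · rw [mem_ball_zero_iff]
      simp only [Complex.norm_real, Real.norm_eq_abs, abs_of_pos hpos]
      calc min ε δ / 2 < min ε δ := by linarith
        _ ≤ δ := min_le_right _ _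
    · simp only [Set.mem_compl_iff, Set.mem_singleton_iff]
      exact_mod_cast ne_of_gt hpos
    · rw [abs_of_pos hpos]
      calc min ε δ / 2 < min ε δ := by linarith
        _ ≤ ε := min_le_left _ _
  intro s hs
  exact hA.eqOn_zero_of_preconnected_of_frequently_eq_zero hconv.isPreconnected h0 hfreq hs

private def amap (z w : EuclideanSpace ℂ (Fin N)) : ℂ × ℂ →L[ℂ] EuclideanSpace ℂ (Fin N) :=
  ((ContinuousLinearMap.fst ℂ ℂ ℂ).smulRight z) + ((ContinuousLinearMap.snd ℂ ℂ ℂ).smulRight w)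

private lemma amap_apply (z w : EuclideanSpace ℂ (Fin N)) (q : ℂ × ℂ) :
    amap z w q = q.1 • z + q.2 • w := rfl

private def Hfun (f g u v P Q : EuclideanSpace ℂ (Fin N) → ℂ) (z w : EuclideanSpace ℂ (Fin N))
    (pq : (ℂ × ℂ) × (ℂ × ℂ)) : ℂ :=
  f (amap z w (pq.1.1 + Complex.I * pq.1.2, pq.2.1 + Complex.I * pq.2.2)) *
      conj (v (amap z w (conj (pq.1.1 - Complex.I * pq.1.2), conj (pq.2.1 - Complex.I * pq.2.2))))
    - u (amap z w (pq.1.1 + Complex.I * pq.1.2, pq.2.1 + Complex.I * pq.2.2)) *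
      conj (g (amap z w (conj (pq.1.1 - Complex.I * pq.1.2), conj (pq.2.1 - Complex.I * pq.2.2))))
    - P (amap z w (pq.1.1 + Complex.I * pq.1.2, pq.2.1 + Complex.I * pq.2.2))
    - conj (Q (amap z w (conj (pq.1.1 - Complex.I * pq.1.2), conj (pq.2.1 - Complex.I * pq.2.2))))

private lemma Hfun_def (f g u v P Q : EuclideanSpace ℂ (Fin N) → ℂ)
    (z w : EuclideanSpace ℂ (Fin N)) (x₁ y₁ x₂ y₂ : ℂ) :
    Hfun f g u v P Q z w ((x₁, y₁), (x₂, y₂)) =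
      f (amap z w (x₁ + Complex.I * y₁, x₂ + Complex.I * y₂)) *
        conj (v (amap z w (conj (x₁ - Complex.I * y₁), conj (x₂ - Complex.I * y₂))))
      - u (amap z w (x₁ + Complex.I * y₁, x₂ + Complex.I * y₂)) *
        conj (g (amap z w (conj (x₁ - Complex.I * y₁), conj (x₂ - Complex.I * y₂))))
      - P (amap z w (x₁ + Complex.I * y₁, x₂ + Complex.I * y₂))
      - conj (Q (amap z w (conj (x₁ - Complex.I * y₁), conj (x₂ - Complex.I * y₂)))) := rfl


set_option maxHeartbeats 1000000 in
private lemma polar_small {N : ℕ} {f g u v P Q : EuclideanSpace ℂ (Fin N) → ℂ}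
    (hf : DifferentiableOn ℂ f (ball 0 1)) (hg : DifferentiableOn ℂ g (ball 0 1))
    (hu : DifferentiableOn ℂ u (ball 0 1)) (hv : DifferentiableOn ℂ v (ball 0 1))
    (hP : DifferentiableOn ℂ P (ball 0 1)) (hQ : DifferentiableOn ℂ Q (ball 0 1))
    (hf0 : f 0 = 0) (hg0 : g 0 = 0) (hu0 : u 0 = 0) (hv0 : v 0 = 0)
    (hEq : ∀ ζ ∈ ball (0 : EuclideanSpace ℂ (Fin N)) 1,
      f ζ * conj (v ζ) - u ζ * conj (g ζ) = P ζ + conj (Q ζ))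
    {z w : EuclideanSpace ℂ (Fin N)} (hz : ‖z‖ < 1/4) (hw : ‖w‖ < 1/4) :
    f z * conj (v w) = u z * conj (g w) := by
  have dom : ∀ q : ℂ × ℂ, ‖q.1‖ < 2 → ‖q.2‖ < 2 →
      amap z w q ∈ ball (0 : EuclideanSpace ℂ (Fin N)) 1 := by
    intro q h1 h2
    rw [mem_ball_zero_iff, amap_apply]
    have hle := norm_add_le (q.1 • z) (q.2 • w)
    rw [norm_smul, norm_smul] at hle
    have b1 : ‖q.1‖ * ‖z‖ ≤ ‖q.1‖ * (1/4) :=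
      mul_le_mul_of_nonneg_left (le_of_lt hz) (norm_nonneg _)
    have b2 : ‖q.2‖ * ‖w‖ ≤ ‖q.2‖ * (1/4) :=
      mul_le_mul_of_nonneg_left (le_of_lt hw) (norm_nonneg _)
    nlinarith [norm_nonneg q.1, norm_nonneg q.2]
  have dHol : ∀ (F : EuclideanSpace ℂ (Fin N) → ℂ), DifferentiableOn ℂ F (ball 0 1) →
      ∀ q : ℂ × ℂ, ‖q.1‖ < 2 → ‖q.2‖ < 2 →
      DifferentiableAt ℂ (fun r : ℂ × ℂ => F (amap z w r)) q := by
    intro F hF q h1 h2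
    exact (hF.differentiableAt (isOpen_ball.mem_nhds (dom q h1 h2))).comp q
      (amap z w).differentiableAt
  have dAnti : ∀ (F : EuclideanSpace ℂ (Fin N) → ℂ), DifferentiableOn ℂ F (ball 0 1) →
      ∀ q : ℂ × ℂ, ‖q.1‖ < 2 → ‖q.2‖ < 2 →
      DifferentiableAt ℂ (fun r : ℂ × ℂ => conj (F (amap z w (conj r.1, conj r.2)))) q := by
    intro F hF q h1 h2
    exact conj_conj_diffAt (F := fun r : ℂ × ℂ => F (amap z w r)) (p := q)
      (dHol F hF (conj q.1, conj q.2) (by simpa using h1) (by simpa using h2))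
  have dL : Differentiable ℂ (fun pq : (ℂ × ℂ) × (ℂ × ℂ) =>
      ((pq.1.1 + Complex.I * pq.1.2 : ℂ), (pq.2.1 + Complex.I * pq.2.2 : ℂ))) :=
    ((differentiable_fst.fst.add ((differentiable_const _).mul differentiable_fst.snd)).prodMk
      (differentiable_snd.fst.add ((differentiable_const _).mul differentiable_snd.snd)))
  have dN : Differentiable ℂ (fun pq : (ℂ × ℂ) × (ℂ × ℂ) =>
      ((pq.1.1 - Complex.I * pq.1.2 : ℂ), (pq.2.1 - Complex.I * pq.2.2 : ℂ))) :=
    ((differentiable_fst.fst.sub ((differentiable_const _).mul differentiable_fst.snd)).prodMk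
      (differentiable_snd.fst.sub ((differentiable_const _).mul differentiable_snd.snd)))
  have dH : ∀ pq : (ℂ × ℂ) × (ℂ × ℂ),
      ‖pq.1.1 + Complex.I * pq.1.2‖ < 2 → ‖pq.2.1 + Complex.I * pq.2.2‖ < 2 →
      ‖pq.1.1 - Complex.I * pq.1.2‖ < 2 → ‖pq.2.1 - Complex.I * pq.2.2‖ < 2 →
      DifferentiableAt ℂ (Hfun f g u v P Q z w) pq := by
    intro pq c1 c2 c3 c4
    have h₁ := (dHol f hf (pq.1.1 + Complex.I * pq.1.2, pq.2.1 + Complex.I * pq.2.2) c1 c2).comp pq (dL pq)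
    have h₂ := (dAnti v hv (pq.1.1 - Complex.I * pq.1.2, pq.2.1 - Complex.I * pq.2.2) c3 c4).comp pq (dN pq)
    have h₃ := (dHol u hu (pq.1.1 + Complex.I * pq.1.2, pq.2.1 + Complex.I * pq.2.2) c1 c2).comp pq (dL pq)
    have h₄ := (dAnti g hg (pq.1.1 - Complex.I * pq.1.2, pq.2.1 - Complex.I * pq.2.2) c3 c4).comp pq (dN pq)
    have h₅ := (dHol P hP (pq.1.1 + Complex.I * pq.1.2, pq.2.1 + Complex.I * pq.2.2) c1 c2).comp pq (dL pq)
    have h₆ := (dAnti Q hQ (pq.1.1 - Complex.I * pq.1.2, pq.2.1 - Complex.I * pq.2.2) c3 c4).comp pq (dN pq)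
    unfold Hfun
    exact (((h₁.mul h₂).sub (h₃.mul h₄)).sub h₅).sub h₆
  have C0 : ∀ x₁ y₁ x₂ y₂ : ℝ,
      ‖(x₁ : ℂ) + Complex.I * y₁‖ < 2 → ‖(x₂ : ℂ) + Complex.I * y₂‖ < 2 →
      Hfun f g u v P Q z w (((x₁ : ℂ), (y₁ : ℂ)), ((x₂ : ℂ), (y₂ : ℂ))) = 0 := by
    intro x₁ y₁ x₂ y₂ a1 a3
    have e1 : conj ((x₁ : ℂ) - Complex.I * y₁) = (x₁ : ℂ) + Complex.I * y₁ := by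
      simp only [map_sub, map_mul, Complex.conj_ofReal, Complex.conj_I]
      ring
    have e2 : conj ((x₂ : ℂ) - Complex.I * y₂) = (x₂ : ℂ) + Complex.I * y₂ := by
      simp only [map_sub, map_mul, Complex.conj_ofReal, Complex.conj_I]
      ring
    rw [Hfun_def, e1, e2]
    have hm := dom ((x₁ : ℂ) + Complex.I * y₁, (x₂ : ℂ) + Complex.I * y₂) a1 a3
    have heq := hEq _ hm
    linear_combination heq
  have C1 : ∀ (x₁ : ℂ) (y₁ x₂ y₂ : ℝ),
      ‖x₁ + Complex.I * y₁‖ < 2 → ‖x₁ - Complex.I * y₁‖ < 2 →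
      ‖(x₂ : ℂ) + Complex.I * y₂‖ < 2 → ‖(x₂ : ℂ) - Complex.I * y₂‖ < 2 →
      Hfun f g u v P Q z w ((x₁, (y₁ : ℂ)), ((x₂ : ℂ), (y₂ : ℂ))) = 0 := by
    intro x₁ y₁ x₂ y₂ b1 b2 b3 b4
    have hy : ‖(y₁ : ℂ)‖ < 2 := by
      have h := norm_sub_le ((x₁ : ℂ) + Complex.I * y₁) (x₁ - Complex.I * y₁)
      rw [show (x₁ + Complex.I * y₁) - (x₁ - Complex.I * y₁) = 2 * (Complex.I * (y₁ : ℂ)) by ring,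
        norm_mul, norm_mul, Complex.norm_I, one_mul,
        show ‖(2 : ℂ)‖ = 2 by norm_num] at h
      linarith
    have key := extend_one_var (φ := fun t : ℂ =>
        Hfun f g u v P Q z w ((t, (y₁ : ℂ)), ((x₂ : ℂ), (y₂ : ℂ))))
      (S := ball (-(Complex.I * (y₁ : ℂ))) 2 ∩ ball (Complex.I * (y₁ : ℂ)) 2)
      ((convex_ball _ _).inter (convex_ball _ _)) (isOpen_ball.inter isOpen_ball)
      ?_ ?_ (ε := 2 - ‖(y₁ : ℂ)‖) (by linarith) ?_
    · refine key x₁ ⟨?_, ?_⟩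
      · rw [mem_ball_iff_norm, sub_neg_eq_add]; exact b1
      · rw [mem_ball_iff_norm]; exact b2
    · intro t ht
      obtain ⟨ht1, ht2⟩ := ht
      rw [mem_ball_iff_norm, sub_neg_eq_add] at ht1
      rw [mem_ball_iff_norm] at ht2
      have haff : DifferentiableAt ℂ
          (fun t : ℂ => ((t, ((y₁ : ℝ) : ℂ)), (((x₂ : ℝ) : ℂ), ((y₂ : ℝ) : ℂ)))) t :=
        (differentiableAt_id.prodMk (differentiableAt_const _)).prodMk (differentiableAt_const _)
      exact (dH ((t, (y₁ : ℂ)), ((x₂ : ℂ), (y₂ : ℂ))) ht1 b3 ht2 b4).comp t haff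
    · constructor
      · rw [mem_ball_iff_norm, zero_sub, norm_neg, norm_neg, norm_mul, Complex.norm_I, one_mul]
        exact hy
      · rw [mem_ball_iff_norm, zero_sub, norm_neg, norm_mul, Complex.norm_I, one_mul]
        exact hy
    · intro t ht
      have hnt : ‖(t : ℂ)‖ = |t| := by rw [Complex.norm_real, Real.norm_eq_abs]
      have hIy : ‖Complex.I * (y₁ : ℂ)‖ = ‖(y₁ : ℂ)‖ := by
        rw [norm_mul, Complex.norm_I, one_mul]
      have c1 : ‖(t : ℂ) + Complex.I * (y₁ : ℂ)‖ < 2 := by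
        have := norm_add_le (t : ℂ) (Complex.I * (y₁ : ℂ))
        rw [hnt, hIy] at this
        linarith
      exact C0 t y₁ x₂ y₂ c1 b3
  have C2 : ∀ (x₁ y₁ : ℂ) (x₂ y₂ : ℝ),
      ‖x₁ + Complex.I * y₁‖ < 2 → ‖x₁ - Complex.I * y₁‖ < 2 →
      ‖(x₂ : ℂ) + Complex.I * y₂‖ < 2 → ‖(x₂ : ℂ) - Complex.I * y₂‖ < 2 →
      Hfun f g u v P Q z w ((x₁, y₁), ((x₂ : ℂ), (y₂ : ℂ))) = 0 := by
    intro x₁ y₁ x₂ y₂ b1 b2 b3 b4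
    have hx : ‖x₁‖ < 2 := by
      have h := norm_add_le (x₁ + Complex.I * y₁) (x₁ - Complex.I * y₁)
      rw [show (x₁ + Complex.I * y₁) + (x₁ - Complex.I * y₁) = 2 * x₁ by ring,
        norm_mul, show ‖(2:ℂ)‖ = 2 by norm_num] at h
      linarith
    have en1 : ∀ s : ℂ, ‖x₁ + Complex.I * s‖ = ‖s - Complex.I * x₁‖ := by
      intro s
      rw [show x₁ + Complex.I * s = Complex.I * (s - Complex.I * x₁) by
        linear_combination (x₁ : ℂ) * Complex.I_mul_I, norm_mul, Complex.norm_I, one_mul]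
    have en2 : ∀ s : ℂ, ‖x₁ - Complex.I * s‖ = ‖s + Complex.I * x₁‖ := by
      intro s
      rw [show x₁ - Complex.I * s = (-Complex.I) * (s + Complex.I * x₁) by
        linear_combination (x₁ : ℂ) * Complex.I_mul_I, norm_mul, norm_neg, Complex.norm_I, one_mul]
    have key := extend_one_var (φ := fun s : ℂ =>
        Hfun f g u v P Q z w ((x₁, s), ((x₂ : ℂ), (y₂ : ℂ))))
      (S := ball (Complex.I * x₁) 2 ∩ ball (-(Complex.I * x₁)) 2)
      ((convex_ball _ _).inter (convex_ball _ _)) (isOpen_ball.inter isOpen_ball)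
      ?_ ?_ (ε := 2 - ‖x₁‖) (by linarith) ?_
    · refine key y₁ ⟨?_, ?_⟩
      · rw [mem_ball_iff_norm, ← en1]; exact b1
      · rw [mem_ball_iff_norm, sub_neg_eq_add, ← en2]; exact b2
    · intro s hs
      obtain ⟨hs1, hs2⟩ := hs
      rw [mem_ball_iff_norm, ← en1] at hs1
      rw [mem_ball_iff_norm, sub_neg_eq_add, ← en2] at hs2
      have haff : DifferentiableAt ℂ
          (fun s : ℂ => ((x₁, s), (((x₂ : ℝ) : ℂ), ((y₂ : ℝ) : ℂ)))) s :=
        ((differentiableAt_const _).prodMk differentiableAt_id).prodMk (differentiableAt_const _)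
      exact (dH ((x₁, s), ((x₂ : ℂ), (y₂ : ℂ))) hs1 b3 hs2 b4).comp s haff
    · constructor
      · rw [mem_ball_iff_norm, zero_sub, norm_neg, norm_mul, Complex.norm_I, one_mul]; exact hx
      · rw [mem_ball_iff_norm, zero_sub, norm_neg, norm_neg, norm_mul, Complex.norm_I, one_mul]
        exact hx
    · intro s hsr
      have hns : ‖(s : ℂ)‖ = |s| := by rw [Complex.norm_real, Real.norm_eq_abs]
      have c1 : ‖x₁ + Complex.I * (s : ℂ)‖ < 2 := by
        have := norm_add_le x₁ (Complex.I * (s : ℂ))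
        rw [norm_mul, Complex.norm_I, one_mul, hns] at this
        linarith
      have c2 : ‖x₁ - Complex.I * (s : ℂ)‖ < 2 := by
        have := norm_sub_le x₁ (Complex.I * (s : ℂ))
        rw [norm_mul, Complex.norm_I, one_mul, hns] at this
        linarith
      exact C1 x₁ s x₂ y₂ c1 c2 b3 b4
  have C3 : ∀ (x₁ y₁ x₂ : ℂ) (y₂ : ℝ),
      ‖x₁ + Complex.I * y₁‖ < 2 → ‖x₁ - Complex.I * y₁‖ < 2 →
      ‖x₂ + Complex.I * y₂‖ < 2 → ‖x₂ - Complex.I * y₂‖ < 2 →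
      Hfun f g u v P Q z w ((x₁, y₁), (x₂, (y₂ : ℂ))) = 0 := by
    intro x₁ y₁ x₂ y₂ b1 b2 b3 b4
    have hy : ‖(y₂ : ℂ)‖ < 2 := by
      have h := norm_sub_le (x₂ + Complex.I * y₂) (x₂ - Complex.I * y₂)
      rw [show (x₂ + Complex.I * y₂) - (x₂ - Complex.I * y₂) = 2 * (Complex.I * (y₂ : ℂ)) by ring,
        norm_mul, norm_mul, Complex.norm_I, one_mul,
        show ‖(2 : ℂ)‖ = 2 by norm_num] at h
      linarith
    have key := extend_one_var (φ := fun t : ℂ =>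
        Hfun f g u v P Q z w ((x₁, y₁), (t, (y₂ : ℂ))))
      (S := ball (-(Complex.I * (y₂ : ℂ))) 2 ∩ ball (Complex.I * (y₂ : ℂ)) 2)
      ((convex_ball _ _).inter (convex_ball _ _)) (isOpen_ball.inter isOpen_ball)
      ?_ ?_ (ε := 2 - ‖(y₂ : ℂ)‖) (by linarith) ?_
    · refine key x₂ ⟨?_, ?_⟩
      · rw [mem_ball_iff_norm, sub_neg_eq_add]; exact b3
      · rw [mem_ball_iff_norm]; exact b4
    · intro t ht
      obtain ⟨ht1, ht2⟩ := ht
      rw [mem_ball_iff_norm, sub_neg_eq_add] at ht1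
      rw [mem_ball_iff_norm] at ht2
      have haff : DifferentiableAt ℂ
          (fun t : ℂ => ((x₁, y₁), (t, ((y₂ : ℝ) : ℂ)))) t :=
        (differentiableAt_const _).prodMk (differentiableAt_id.prodMk (differentiableAt_const _))
      exact (dH ((x₁, y₁), (t, (y₂ : ℂ))) b1 ht1 b2 ht2).comp t haff
    · constructor
      · rw [mem_ball_iff_norm, zero_sub, norm_neg, norm_neg, norm_mul, Complex.norm_I, one_mul]
        exact hy
      · rw [mem_ball_iff_norm, zero_sub, norm_neg, norm_mul, Complex.norm_I, one_mul]
        exact hy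
    · intro t ht
      have hnt : ‖(t : ℂ)‖ = |t| := by rw [Complex.norm_real, Real.norm_eq_abs]
      have c1 : ‖(t : ℂ) + Complex.I * (y₂ : ℂ)‖ < 2 := by
        have := norm_add_le (t : ℂ) (Complex.I * (y₂ : ℂ))
        rw [norm_mul, Complex.norm_I, one_mul, hnt] at this
        linarith
      have c2 : ‖(t : ℂ) - Complex.I * (y₂ : ℂ)‖ < 2 := by
        have := norm_sub_le (t : ℂ) (Complex.I * (y₂ : ℂ))
        rw [norm_mul, Complex.norm_I, one_mul, hnt] at this
        linarith
      exact C2 x₁ y₁ t y₂ b1 b2 c1 c2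
  have C4 : ∀ (x₁ y₁ x₂ y₂ : ℂ),
      ‖x₁ + Complex.I * y₁‖ < 2 → ‖x₁ - Complex.I * y₁‖ < 2 →
      ‖x₂ + Complex.I * y₂‖ < 2 → ‖x₂ - Complex.I * y₂‖ < 2 →
      Hfun f g u v P Q z w ((x₁, y₁), (x₂, y₂)) = 0 := by
    intro x₁ y₁ x₂ y₂ b1 b2 b3 b4
    have hx : ‖x₂‖ < 2 := by
      have h := norm_add_le (x₂ + Complex.I * y₂) (x₂ - Complex.I * y₂)
      rw [show (x₂ + Complex.I * y₂) + (x₂ - Complex.I * y₂) = 2 * x₂ by ring,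
        norm_mul, show ‖(2:ℂ)‖ = 2 by norm_num] at h
      linarith
    have en1 : ∀ s : ℂ, ‖x₂ + Complex.I * s‖ = ‖s - Complex.I * x₂‖ := by
      intro s
      rw [show x₂ + Complex.I * s = Complex.I * (s - Complex.I * x₂) by
        linear_combination (x₂ : ℂ) * Complex.I_mul_I, norm_mul, Complex.norm_I, one_mul]
    have en2 : ∀ s : ℂ, ‖x₂ - Complex.I * s‖ = ‖s + Complex.I * x₂‖ := by
      intro s
      rw [show x₂ - Complex.I * s = (-Complex.I) * (s + Complex.I * x₂) by
        linear_combination (x₂ : ℂ) * Complex.I_mul_I, norm_mul, norm_neg, Complex.norm_I, one_mul]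
    have key := extend_one_var (φ := fun s : ℂ =>
        Hfun f g u v P Q z w ((x₁, y₁), (x₂, s)))
      (S := ball (Complex.I * x₂) 2 ∩ ball (-(Complex.I * x₂)) 2)
      ((convex_ball _ _).inter (convex_ball _ _)) (isOpen_ball.inter isOpen_ball)
      ?_ ?_ (ε := 2 - ‖x₂‖) (by linarith) ?_
    · refine key y₂ ⟨?_, ?_⟩
      · rw [mem_ball_iff_norm, ← en1]; exact b3
      · rw [mem_ball_iff_norm, sub_neg_eq_add, ← en2]; exact b4
    · intro s hs
      obtain ⟨hs1, hs2⟩ := hs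
      rw [mem_ball_iff_norm, ← en1] at hs1
      rw [mem_ball_iff_norm, sub_neg_eq_add, ← en2] at hs2
      have haff : DifferentiableAt ℂ
          (fun s : ℂ => ((x₁, y₁), (x₂, s))) s :=
        (differentiableAt_const _).prodMk ((differentiableAt_const _).prodMk differentiableAt_id)
      exact (dH ((x₁, y₁), (x₂, s)) b1 hs1 b2 hs2).comp s haff
    · constructor
      · rw [mem_ball_iff_norm, zero_sub, norm_neg, norm_mul, Complex.norm_I, one_mul]; exact hx
      · rw [mem_ball_iff_norm, zero_sub, norm_neg, norm_neg, norm_mul, Complex.norm_I, one_mul]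
        exact hx
    · intro s hsr
      have hns : ‖(s : ℂ)‖ = |s| := by rw [Complex.norm_real, Real.norm_eq_abs]
      have c1 : ‖x₂ + Complex.I * (s : ℂ)‖ < 2 := by
        have := norm_add_le x₂ (Complex.I * (s : ℂ))
        rw [norm_mul, Complex.norm_I, one_mul, hns] at this
        linarith
      have c2 : ‖x₂ - Complex.I * (s : ℂ)‖ < 2 := by
        have := norm_sub_le x₂ (Complex.I * (s : ℂ))
        rw [norm_mul, Complex.norm_I, one_mul, hns] at this
        linarith
      exact C3 x₁ y₁ x₂ s b1 b2 c1 c2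
  have key4 : ∀ l₁ l₂ n₁ n₂ : ℂ, ‖l₁‖ < 2 → ‖l₂‖ < 2 → ‖n₁‖ < 2 → ‖n₂‖ < 2 →
      f (amap z w (l₁, l₂)) * conj (v (amap z w (conj n₁, conj n₂)))
        - u (amap z w (l₁, l₂)) * conj (g (amap z w (conj n₁, conj n₂)))
        - P (amap z w (l₁, l₂)) - conj (Q (amap z w (conj n₁, conj n₂))) = 0 := by
    intro l₁ l₂ n₁ n₂ m1 m2 m3 m4
    have e1p : (l₁ + n₁)/2 + Complex.I * ((l₁ - n₁)/(2*Complex.I)) = l₁ := by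
      field_simp
      ring
    have e1m : (l₁ + n₁)/2 - Complex.I * ((l₁ - n₁)/(2*Complex.I)) = n₁ := by
      field_simp
      ring
    have e2p : (l₂ + n₂)/2 + Complex.I * ((l₂ - n₂)/(2*Complex.I)) = l₂ := by
      field_simp
      ring
    have e2m : (l₂ + n₂)/2 - Complex.I * ((l₂ - n₂)/(2*Complex.I)) = n₂ := by
      field_simp
      ring
    have h := C4 ((l₁ + n₁)/2) ((l₁ - n₁)/(2*Complex.I)) ((l₂ + n₂)/2) ((l₂ - n₂)/(2*Complex.I))
      (by rw [e1p]; exact m1) (by rw [e1m]; exact m3)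
      (by rw [e2p]; exact m2) (by rw [e2m]; exact m4)
    rw [Hfun_def, e1p, e1m, e2p, e2m] at h
    exact h
  have hA00 : amap z w ((0:ℂ), (0:ℂ)) = 0 := by
    rw [amap_apply]; simp
  have hA10 : amap z w ((1:ℂ), (0:ℂ)) = z := by rw [amap_apply]; simp
  have hA01 : amap z w ((0:ℂ), (1:ℂ)) = w := by rw [amap_apply]; simp
  have nz2 : ‖(0:ℂ)‖ < 2 := by norm_num
  have no2 : ‖(1:ℂ)‖ < 2 := by norm_num
  have hcz : ((conj (0:ℂ), conj (0:ℂ)) : ℂ × ℂ) = ((0:ℂ), (0:ℂ)) := by simp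
  have hco : ((conj (0:ℂ), conj (1:ℂ)) : ℂ × ℂ) = ((0:ℂ), (1:ℂ)) := by simp
  have S1 : ∀ n₁ n₂ : ℂ, ‖n₁‖ < 2 → ‖n₂‖ < 2 →
      conj (Q (amap z w (conj n₁, conj n₂))) = - P 0 := by
    intro n₁ n₂ m3 m4
    have h := key4 0 0 n₁ n₂ nz2 nz2 m3 m4
    rw [hA00, hf0, hu0] at h
    linear_combination -h
  have hQ0 : conj (Q 0) = - P 0 := by
    have h := S1 0 0 nz2 nz2
    rw [hcz, hA00] at h
    exact h
  have S2 : ∀ l₁ l₂ : ℂ, ‖l₁‖ < 2 → ‖l₂‖ < 2 → P (amap z w (l₁, l₂)) = P 0 := by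
    intro l₁ l₂ m1 m2
    have h := key4 l₁ l₂ 0 0 m1 m2 nz2 nz2
    rw [hcz, hA00, hg0, hv0, hQ0, map_zero, mul_zero, mul_zero] at h
    linear_combination -h
  have hPz : P z = P 0 := by
    have h := S2 1 0 no2 nz2
    rw [hA10] at h
    exact h
  have hQw : conj (Q w) = - P 0 := by
    have h := S1 0 1 nz2 no2
    rw [hco, hA01] at h
    exact h
  have hfinal := key4 1 0 0 1 no2 nz2 nz2 no2
  rw [hA10, hco, hA01, hPz, hQw] at hfinal
  linear_combination hfinal

/-- function-theoretic content of Corollary 1.3: if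
`f·conj(v) − u·conj(g)` is pluriharmonic (with all functions vanishing at 0), then `φ, ψ` are
both holomorphic, both anti-holomorphic, or linearly dependent. -/
theorem stmt17 {N : ℕ} (hN : 1 ≤ N)
    (f g u v : EuclideanSpace ℂ (Fin N) → ℂ)
    (hf : DifferentiableOn ℂ f (ball 0 1))
    (hg : DifferentiableOn ℂ g (ball 0 1))
    (hu : DifferentiableOn ℂ u (ball 0 1))
    (hv : DifferentiableOn ℂ v (ball 0 1))
    (hf0 : f 0 = 0) (hg0 : g 0 = 0) (hu0 : u 0 = 0) (hv0 : v 0 = 0)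
    (hph : Pluriharmonic (fun z => f z * conj (v z) - u z * conj (g z))) :
    ((∀ z ∈ ball (0 : EuclideanSpace ℂ (Fin N)) 1, g z = 0) ∧
      (∀ z ∈ ball (0 : EuclideanSpace ℂ (Fin N)) 1, v z = 0)) ∨
    ((∀ z ∈ ball (0 : EuclideanSpace ℂ (Fin N)) 1, f z = 0) ∧
      (∀ z ∈ ball (0 : EuclideanSpace ℂ (Fin N)) 1, u z = 0)) ∨
    (∃ c₁ c₂ : ℂ, ¬(c₁ = 0 ∧ c₂ = 0) ∧
      ∀ z ∈ ball (0 : EuclideanSpace ℂ (Fin N)) 1,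
        c₁ * (f z + conj (g z)) + c₂ * (u z + conj (v z)) = 0) := by
  classical
  obtain ⟨P, Q, hP, hQ, hEq⟩ := hph
  have hEq' : ∀ ζ ∈ ball (0 : EuclideanSpace ℂ (Fin N)) 1,
      f ζ * conj (v ζ) - u ζ * conj (g ζ) = P ζ + conj (Q ζ) := hEq
  have small : ∀ z' w' : EuclideanSpace ℂ (Fin N), ‖z'‖ < 1/4 → ‖w'‖ < 1/4 →
      f z' * conj (v w') = u z' * conj (g w') := fun z' w' hz' hw' =>
    polar_small hf hg hu hv hP hQ hf0 hg0 hu0 hv0 hEq' hz' hw'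
  have lineext : ∀ (F : EuclideanSpace ℂ (Fin N) → ℂ), DifferentiableOn ℂ F (ball 0 1) →
      (∀ x, ‖x‖ < 1/4 → F x = 0) → ∀ x ∈ ball (0 : EuclideanSpace ℂ (Fin N)) 1, F x = 0 := by
    intro F hF hsm x hx
    by_cases hx0 : x = 0
    · subst hx0
      exact hsm 0 (by rw [norm_zero]; norm_num)
    have hxn : 0 < ‖x‖ := norm_pos_iff.2 hx0
    have key := extend_one_var (φ := fun t : ℂ => F (t • x)) (S := ball (0:ℂ) (1/‖x‖))
      (convex_ball _ _) isOpen_ball ?_ ?_ (ε := (1/4)/‖x‖) (by positivity) ?_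
    · have h1 : (1:ℂ) ∈ ball (0:ℂ) (1/‖x‖) := by
        rw [mem_ball_zero_iff, norm_one, lt_div_iff₀ hxn, one_mul]
        exact mem_ball_zero_iff.1 hx
      have := key 1 h1
      simpa using this
    · intro t ht
      rw [mem_ball_zero_iff] at ht
      have hm : t • x ∈ ball (0 : EuclideanSpace ℂ (Fin N)) 1 := by
        rw [mem_ball_zero_iff, norm_smul]
        calc ‖t‖ * ‖x‖ < (1/‖x‖) * ‖x‖ := mul_lt_mul_of_pos_right ht hxn
          _ = 1 := by field_simp
      exact (hF.differentiableAt (isOpen_ball.mem_nhds hm)).comp t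
        (differentiableAt_id.smul_const x)
    · exact mem_ball_self (by positivity)
    · intro t ht
      apply hsm
      rw [norm_smul, Complex.norm_real, Real.norm_eq_abs]
      calc |t| * ‖x‖ < ((1/4)/‖x‖) * ‖x‖ := mul_lt_mul_of_pos_right ht hxn
        _ = 1/4 := by field_simp
  have P1 : ∀ z' : EuclideanSpace ℂ (Fin N), ‖z'‖ < 1/4 →
      ∀ w' ∈ ball (0 : EuclideanSpace ℂ (Fin N)) 1,
        conj (f z') * v w' - conj (u z') * g w' = 0 := by
    intro z' hz'
    apply lineext _ ((hv.const_mul _).sub (hg.const_mul _))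
    intro w' hw'
    have h := small z' w' hz' hw'
    have h2 := congrArg conj h
    rw [map_mul, map_mul, Complex.conj_conj, Complex.conj_conj] at h2
    exact sub_eq_zero.2 h2
  have P2 : ∀ z' ∈ ball (0 : EuclideanSpace ℂ (Fin N)) 1,
      ∀ w' ∈ ball (0 : EuclideanSpace ℂ (Fin N)) 1,
        f z' * conj (v w') = u z' * conj (g w') := by
    intro z' hz' w' hw'
    have hzz : ∀ ζ : EuclideanSpace ℂ (Fin N), ‖ζ‖ < 1/4 →
        f ζ * conj (v w') - u ζ * conj (g w') = 0 := by
      intro ζ hζ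
      have h := P1 ζ hζ w' hw'
      have h2 := congrArg conj h
      rw [map_sub, map_mul, map_mul, Complex.conj_conj, Complex.conj_conj, map_zero] at h2
      exact h2
    have := lineext _ ((hf.mul_const _).sub (hu.mul_const _)) hzz z' hz'
    exact sub_eq_zero.1 this
  by_cases hvz : ∀ w' ∈ ball (0 : EuclideanSpace ℂ (Fin N)) 1, v w' = 0
  · by_cases huz : ∀ z' ∈ ball (0 : EuclideanSpace ℂ (Fin N)) 1, u z' = 0
    · right; right
      refine ⟨0, 1, by simp, fun ζ hζ => ?_⟩
      rw [huz ζ hζ, hvz ζ hζ]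
      simp
    · push_neg at huz
      obtain ⟨z₀, hz₀, hz₀n⟩ := huz
      left
      refine ⟨fun w' hw' => ?_, hvz⟩
      have h := P2 z₀ hz₀ w' hw'
      rw [hvz w' hw'] at h
      simp only [map_zero, mul_zero] at h
      have hcg : conj (g w') = 0 := by
        rcases mul_eq_zero.1 h.symm with h' | h'
        · exact absurd h' hz₀n
        · exact h'
      have := congrArg conj hcg
      rwa [Complex.conj_conj, map_zero] at this
  · push_neg at hvz
    obtain ⟨w₀, hw₀, hw₀n⟩ := hvz
    have hvw₀ : conj (v w₀) ≠ 0 := by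
      intro hc
      apply hw₀n
      have := congrArg conj hc
      rwa [Complex.conj_conj, map_zero] at this
    by_cases huz : ∀ z' ∈ ball (0 : EuclideanSpace ℂ (Fin N)) 1, u z' = 0
    · right; left
      refine ⟨fun z' hz' => ?_, huz⟩
      have h := P2 z' hz' w₀ hw₀
      rw [huz z' hz', zero_mul] at h
      rcases mul_eq_zero.1 h with h' | h'
      · exact h'
      · exact absurd h' hvw₀
    · push_neg at huz
      obtain ⟨z₀, hz₀, hz₀n⟩ := huz
      right; right
      set m : ℂ := conj (g w₀) / conj (v w₀) with hm
      have hfm : ∀ z' ∈ ball (0 : EuclideanSpace ℂ (Fin N)) 1, f z' = m * u z' := by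
        intro z' hz'
        have h := P2 z' hz' w₀ hw₀
        have h2 : f z' = (u z' * conj (g w₀)) / conj (v w₀) := by
          rw [eq_div_iff hvw₀]; exact h
        rw [h2, hm]; ring
      have hgm : ∀ w' ∈ ball (0 : EuclideanSpace ℂ (Fin N)) 1,
          conj (g w') = m * conj (v w') := by
        intro w' hw'
        have h := P2 z₀ hz₀ w' hw'
        rw [hfm z₀ hz₀] at h
        refine mul_left_cancel₀ hz₀n ?_
        linear_combination -h
      refine ⟨1, -m, by simp, fun ζ hζ => ?_⟩
      rw [hfm ζ hζ, hgm ζ hζ]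
      ring


end
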